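/- Let Ω ⊆ ℝⁿ be open, let η be an invertible N×N real matrix with ηᵀ = η, let A : Ω → (Fin n → M_N(ℝ)) be a C¹ matrix-valued 1-form whose components satisfy A_k(x)ᵀ·η + η·A_k(x) = 0 for all x ∈ Ω and all k, and let U : Ω → M_N(ℝ) be a C² map with U(x) invertible for every x ∈ Ω. Suppose U satisfies the reduced RT-equation pointwise on Ω: ΔU(x) = U(x)·(δA)(x) − (U(x)ᵀ·η)⁻¹·S(x), where S(x) := Σ_k (∂_kU(x))ᵀ·η·(∂_kU(x)). Then the map w := Uᵀ·η·U − η satisfies Δw = (δA)ᵀ·w + w·(δA) pointwise on Ω. -/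

import Mathlib

open Matrix

attribute [local instance] Matrix.normedAddCommGroup Matrix.normedSpace

/-- Partial derivative `∂_k f` of a matrix-valued map on `ℝⁿ`, in the `k`-th standard
coordinate direction (Fréchet derivative applied to the `k`-th basis vector). -/
noncomputable def pderiv3 {n N : ℕ} (f : (Fin n → ℝ) → Matrix (Fin N) (Fin N) ℝ)
    (k : Fin n) (x : Fin n → ℝ) : Matrix (Fin N) (Fin N) ℝ :=
  fderiv ℝ f x (Pi.single k 1)

/-- Euclidean Laplacian `Δ f = Σ_k ∂_k ∂_k f` acting componentwise. -/
noncomputable def lap3 {n N : ℕ} (f : (Fin n → ℝ) → Matrix (Fin N) (Fin N) ℝ)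
    (x : Fin n → ℝ) : Matrix (Fin N) (Fin N) ℝ :=
  ∑ k : Fin n, pderiv3 (pderiv3 f k) k x

/-- Euclidean codifferential `δA = Σ_k ∂_k A_k` of a matrix-valued 1-form. -/
noncomputable def codiff3 {n N : ℕ} (A : (Fin n → ℝ) → Fin n → Matrix (Fin N) (Fin N) ℝ)
    (x : Fin n → ℝ) : Matrix (Fin N) (Fin N) ℝ :=
  ∑ k : Fin n, pderiv3 (fun y => A y k) k x

/-! ### Auxiliary infrastructure -/

section Aux

variable {n N : ℕ}

local notation "MM" => Matrix (Fin N) (Fin N) ℝ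

/-- Matrix multiplication as a continuous bilinear map (finite dimensions). -/
noncomputable def mulCLM3 (N : ℕ) : Matrix (Fin N) (Fin N) ℝ →L[ℝ]
    Matrix (Fin N) (Fin N) ℝ →L[ℝ] Matrix (Fin N) (Fin N) ℝ :=
  LinearMap.toContinuousLinearMap <|
    (LinearMap.toContinuousLinearMap :
        (Matrix (Fin N) (Fin N) ℝ →ₗ[ℝ] Matrix (Fin N) (Fin N) ℝ) ≃ₗ[ℝ] _).toLinearMap ∘ₗ
      LinearMap.mul ℝ (Matrix (Fin N) (Fin N) ℝ)

@[simp] lemma mulCLM3_apply (a b : MM) : mulCLM3 N a b = a * b := rfl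

/-- Transpose as a continuous linear map. -/
noncomputable def trCLM3 (N : ℕ) : Matrix (Fin N) (Fin N) ℝ →L[ℝ] Matrix (Fin N) (Fin N) ℝ :=
  LinearMap.toContinuousLinearMap
    (Matrix.transposeLinearEquiv (Fin N) (Fin N) ℝ ℝ).toLinearMap

@[simp] lemma trCLM3_apply (a : MM) : trCLM3 N a = aᵀ := rfl

variable {f g : (Fin n → ℝ) → Matrix (Fin N) (Fin N) ℝ} {k : Fin n} {x : Fin n → ℝ}

lemma pderiv3_congr (h : f =ᶠ[nhds x] g) : pderiv3 f k x = pderiv3 g k x := by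
  unfold pderiv3; rw [h.fderiv_eq]

lemma pderiv3_clm (T : MM →L[ℝ] MM) (hf : DifferentiableAt ℝ f x) :
    pderiv3 (fun y => T (f y)) k x = T (pderiv3 f k x) := by
  unfold pderiv3
  have h := (T.hasFDerivAt.comp x hf.hasFDerivAt).fderiv
  simp only [Function.comp_def] at h
  exact DFunLike.congr_fun h _

lemma pderiv3_mul (hf : DifferentiableAt ℝ f x) (hg : DifferentiableAt ℝ g x) :
    pderiv3 (fun y => f y * g y) k x = pderiv3 f k x * g x + f x * pderiv3 g k x := by
  unfold pderiv3
  have h := ((mulCLM3 N).hasFDerivAt_of_bilinear hf.hasFDerivAt hg.hasFDerivAt).fderiv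
  erw [h]
  simp [ContinuousLinearMap.precompR, ContinuousLinearMap.precompL]
  exact add_comm _ _

lemma diffAt_matmul (hf : DifferentiableAt ℝ f x) (hg : DifferentiableAt ℝ g x) :
    DifferentiableAt ℝ (fun y => f y * g y) x := by
  have h := ((mulCLM3 N).hasFDerivAt_of_bilinear hf.hasFDerivAt hg.hasFDerivAt).differentiableAt
  exact h

lemma diffAt_tr_mul_const (c : MM) (hf : DifferentiableAt ℝ f x) :
    DifferentiableAt ℝ (fun y => (f y)ᵀ * c) x := by
  have h := ((((mulCLM3 N).flip c).comp (trCLM3 N)).differentiable.differentiableAt).comp x hf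
  exact h

lemma pderiv3_tr_mul_const (c : MM) (hf : DifferentiableAt ℝ f x) :
    pderiv3 (fun y => (f y)ᵀ * c) k x = (pderiv3 f k x)ᵀ * c := by
  have h := pderiv3_clm (k := k) ((((mulCLM3 N).flip c).comp (trCLM3 N))) hf
  exact h

lemma pderiv3_const_mul (c : MM) (hf : DifferentiableAt ℝ f x) :
    pderiv3 (fun y => c * f y) k x = c * pderiv3 f k x := by
  have h := pderiv3_clm (k := k) (mulCLM3 N c) hf
  exact h

lemma pderiv3_neg : pderiv3 (fun y => -(f y)) k x = -(pderiv3 f k x) := by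
  unfold pderiv3; erw [fderiv_fun_neg]; rfl

lemma pderiv3_sub_const (c : MM) : pderiv3 (fun y => f y - c) k x = pderiv3 f k x := by
  unfold pderiv3; erw [fderiv_sub_const]; rfl

lemma pderiv3_add (hf : DifferentiableAt ℝ f x) (hg : DifferentiableAt ℝ g x) :
    pderiv3 (fun y => f y + g y) k x = pderiv3 f k x + pderiv3 g k x := by
  unfold pderiv3; erw [fderiv_fun_add hf hg]; rfl

end Aux

theorem stmt_3 {n N : ℕ} (Ω : Set (Fin n → ℝ)) (hΩ : IsOpen Ω)
    (η : Matrix (Fin N) (Fin N) ℝ) (hη_inv : IsUnit η) (hη_symm : ηᵀ = η)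
    (A : (Fin n → ℝ) → Fin n → Matrix (Fin N) (Fin N) ℝ)
    (hA : ContDiffOn ℝ 1 A Ω)
    (hA_lie : ∀ x ∈ Ω, ∀ k : Fin n, (A x k)ᵀ * η + η * A x k = 0)
    (U : (Fin n → ℝ) → Matrix (Fin N) (Fin N) ℝ)
    (hU : ContDiffOn ℝ 2 U Ω)
    (hU_inv : ∀ x ∈ Ω, IsUnit (U x))
    (hRT : ∀ x ∈ Ω,
      lap3 U x = U x * codiff3 A x -
        ((U x)ᵀ * η)⁻¹ * (∑ k : Fin n, (pderiv3 U k x)ᵀ * η * pderiv3 U k x)) :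
    ∀ x ∈ Ω,
      lap3 (fun y => (U y)ᵀ * η * U y - η) x =
        (codiff3 A x)ᵀ * ((U x)ᵀ * η * U x - η) +
          ((U x)ᵀ * η * U x - η) * codiff3 A x := by
  intro x hx
  have hmem : Ω ∈ nhds x := hΩ.mem_nhds hx
  -- differentiability facts
  have hUd : ∀ y ∈ Ω, DifferentiableAt ℝ U y := fun y hy =>
    (hU.differentiableOn (by norm_num)).differentiableAt (hΩ.mem_nhds hy)
  have hVd : ∀ k : Fin n, ∀ y ∈ Ω, DifferentiableAt ℝ (pderiv3 U k) y := by
    intro k y hy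
    have h1 := hU.fderiv_of_isOpen hΩ (m := 1) (by norm_num)
    have h2 :=
      (h1.differentiableOn one_ne_zero).differentiableAt (hΩ.mem_nhds hy)
    exact ((ContinuousLinearMap.apply ℝ (Matrix (Fin N) (Fin N) ℝ)
      (Pi.single k 1)).differentiable.differentiableAt).comp y h2
  -- first derivative of W := UᵀηU on Ω
  have hW1 : ∀ k : Fin n, ∀ y ∈ Ω,
      pderiv3 (fun z => (U z)ᵀ * η * U z) k y
        = (pderiv3 U k y)ᵀ * η * U y + (U y)ᵀ * η * pderiv3 U k y := by
    intro k y hy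
    rw [pderiv3_mul (diffAt_tr_mul_const η (hUd y hy)) (hUd y hy),
      pderiv3_tr_mul_const η (hUd y hy)]
  -- second derivative at x
  have hW2 : ∀ k : Fin n,
      pderiv3 (pderiv3 (fun z => (U z)ᵀ * η * U z) k) k x
        = (pderiv3 (pderiv3 U k) k x)ᵀ * η * U x
            + (pderiv3 U k x)ᵀ * η * pderiv3 U k x
          + ((pderiv3 U k x)ᵀ * η * pderiv3 U k x
            + (U x)ᵀ * η * pderiv3 (pderiv3 U k) k x) := by
    intro k
    have he : pderiv3 (fun z => (U z)ᵀ * η * U z) k =ᶠ[nhds x]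
        (fun y => (pderiv3 U k y)ᵀ * η * U y + (U y)ᵀ * η * pderiv3 U k y) :=
      Filter.eventuallyEq_of_mem hmem (fun y hy => hW1 k y hy)
    rw [pderiv3_congr he,
      pderiv3_add
        (diffAt_matmul (diffAt_tr_mul_const η (hVd k x hx)) (hUd x hx))
        (diffAt_matmul (diffAt_tr_mul_const η (hUd x hx)) (hVd k x hx)),
      pderiv3_mul (diffAt_tr_mul_const η (hVd k x hx)) (hUd x hx),
      pderiv3_mul (diffAt_tr_mul_const η (hUd x hx)) (hVd k x hx),
      pderiv3_tr_mul_const η (hVd k x hx), pderiv3_tr_mul_const η (hUd x hx)]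
  set D := codiff3 A x with hD
  set S := ∑ k : Fin n, (pderiv3 U k x)ᵀ * η * pderiv3 U k x with hS
  set u := U x with hu
  -- Laplacian of w
  have hsub : ∀ k : Fin n, pderiv3 (fun y => (U y)ᵀ * η * U y - η) k
      = pderiv3 (fun z => (U z)ᵀ * η * U z) k := by
    intro k; funext y; exact pderiv3_sub_const η
  have key : lap3 (fun y => (U y)ᵀ * η * U y - η) x
      = (lap3 U x)ᵀ * η * u + (u)ᵀ * η * (lap3 U x) + (S + S) := by
    simp only [lap3]
    rw [Finset.sum_congr rfl fun k _ => by rw [hsub k, hW2 k]]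
    rw [hS]
    simp only [Matrix.transpose_sum, Finset.sum_mul, Finset.mul_sum,
      ← Finset.sum_add_distrib]
    exact Finset.sum_congr rfl fun k _ => by abel
  -- determinant facts
  have hdet_uTη : IsUnit ((u)ᵀ * η).det := by
    rw [Matrix.det_mul, Matrix.det_transpose]
    exact ((Matrix.isUnit_iff_isUnit_det _).mp (hU_inv x hx)).mul
      ((Matrix.isUnit_iff_isUnit_det _).mp hη_inv)
  have hdet_ηu : IsUnit (η * u).det := by
    rw [Matrix.det_mul]
    exact ((Matrix.isUnit_iff_isUnit_det _).mp hη_inv).mul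
      ((Matrix.isUnit_iff_isUnit_det _).mp (hU_inv x hx))
  have hSsymm : Sᵀ = S := by
    rw [hS, Matrix.transpose_sum]
    exact Finset.sum_congr rfl fun k _ => by
      simp [Matrix.transpose_mul, hη_symm, mul_assoc]
  -- consequences of the RT equation
  have f2 : (u)ᵀ * η * (lap3 U x) = (u)ᵀ * η * u * D - S := by
    rw [hRT x hx, mul_sub, ← mul_assoc, ← mul_assoc,
      Matrix.mul_nonsing_inv _ hdet_uTη, one_mul]
  have f1 : (lap3 U x)ᵀ * η * u = Dᵀ * ((u)ᵀ * η * u) - S := by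
    rw [hRT x hx, Matrix.transpose_sub, sub_mul, sub_mul]
    congr 1
    · rw [Matrix.transpose_mul]
      simp only [mul_assoc]
      rfl
    · rw [Matrix.transpose_mul, hSsymm, Matrix.transpose_nonsing_inv]
      have h3 : ((u)ᵀ * η)ᵀ = η * u := by
        rw [Matrix.transpose_mul, hη_symm, Matrix.transpose_transpose]
      rw [h3]
      simp only [mul_assoc]
      rw [Matrix.nonsing_inv_mul _ hdet_ηu, mul_one]
  -- antisymmetry of δA
  have f3 : Dᵀ * η = -(η * D) := by
    have hk : ∀ k : Fin n, (pderiv3 (fun y => A y k) k x)ᵀ * η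
        = -(η * pderiv3 (fun y => A y k) k x) := by
      intro k
      have hAk : DifferentiableAt ℝ (fun y => A y k) x := by
        have hAd : DifferentiableAt ℝ A x :=
          (hA.differentiableOn one_ne_zero).differentiableAt (hΩ.mem_nhds hx)
        exact differentiableAt_pi.mp hAd k
      have h1 : pderiv3 (fun y => (A y k)ᵀ * η) k x
          = (pderiv3 (fun y => A y k) k x)ᵀ * η := pderiv3_tr_mul_const η hAk
      have h2 : pderiv3 (fun y => -(η * A y k)) k x
          = -(η * pderiv3 (fun y => A y k) k x) := by
        rw [pderiv3_neg, pderiv3_const_mul η hAk]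
      have he : (fun y => (A y k)ᵀ * η) =ᶠ[nhds x] (fun y => -(η * A y k)) :=
        Filter.eventuallyEq_of_mem hmem fun y hy =>
          eq_neg_of_add_eq_zero_left (hA_lie y hy k)
      rw [← h1, pderiv3_congr he, h2]
    rw [hD]
    simp only [codiff3, Matrix.transpose_sum, Finset.sum_mul, Finset.mul_sum]
    rw [← Finset.sum_neg_distrib]
    exact Finset.sum_congr rfl fun k _ => hk k
  -- final algebra
  rw [key, f1, f2, mul_sub, sub_mul, f3]
  abel
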